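/- In U_q(gl(M|N)), for i < m < j: E_{ij} F_{mj} − (−1)^{([m]+[j])} F_{mj} E_{ij} = q^{−d_mK_m + d_jK_j} E_{im}, and E_{mj} F_{ij} − (−1)^{([m]+[j])} F_{ij} E_{mj} = F_{im} q^{d_mK_m − d_jK_j}. -/

import Mathlib

noncomputable section

/-- The parity `[i]` of the index `i` in `gl(M|N)`: `0` if `i ≤ M`, `1` otherwise. -/
def par (M i : ℕ) : ℕ := if i ≤ M then 0 else 1

/-- `dd M i = (-1)^[i]`. -/
def dd (M i : ℕ) : ℤ := if i ≤ M then 1 else -1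

/-- The data of a representation of the Drinfeld–Jimbo–Yamane presentation of the quantum
superalgebra `U_q(gl(M|N))` in a `ℂ`-algebra `A`.  Here `q = exp ℏ`, the generators are
`E i`, `F i` for `1 ≤ i ≤ M + N - 1`, and `K i ν` stands for `q^{ν K_i}`.  The fields are
exactly the defining relations (including all Serre relations). -/
structure UqGL (M N : ℕ) (A : Type*) [Ring A] [Algebra ℂ A] where
  ℏ : ℂ
  /-- `q` is not a root of unity; in particular `q ≠ ± 1`. -/
  q_ne_one : Complex.exp (2 * ℏ) ≠ 1
  E : ℕ → A
  F : ℕ → A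
  K : ℕ → ℂ → A
  K_zero : ∀ i, K i 0 = 1
  K_add : ∀ i ν μ, K i ν * K i μ = K i (ν + μ)
  K_comm : ∀ i j ν μ, K i ν * K j μ = K j μ * K i ν
  K_E : ∀ i j ν, K i ν * E j =
    Complex.exp (ℏ * ν * ((if i = j then 1 else 0) - (if i = j + 1 then 1 else 0))) •
      (E j * K i ν)
  K_F : ∀ i j ν, K i ν * F j =
    Complex.exp (-(ℏ * ν * ((if i = j then 1 else 0) - (if i = j + 1 then 1 else 0)))) •
      (F j * K i ν)
  EF : ∀ i j, 1 ≤ i → i < M + N → 1 ≤ j → j < M + N →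
    E i * F j -
        ((-1 : ℂ) ^ ((par M i + par M (i + 1)) * (par M j + par M (j + 1)))) • (F j * E i) =
      if i = j then
        (Complex.exp (ℏ * (dd M i : ℂ)) - Complex.exp (-(ℏ * (dd M i : ℂ))))⁻¹ •
          (K i (dd M i : ℂ) * K (i + 1) (-(dd M (i + 1) : ℂ)) -
            K i (-(dd M i : ℂ)) * K (i + 1) (dd M (i + 1) : ℂ))
      else 0
  EE_far : ∀ i j, 1 ≤ i → j < M + N → i + 1 < j → E i * E j = E j * E i
  FF_far : ∀ i j, 1 ≤ i → j < M + N → i + 1 < j → F i * F j = F j * F i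
  E_M_sq : E M * E M = 0
  F_M_sq : F M * F M = 0
  serre_E_down : ∀ i, 2 ≤ i → i < M + N → i ≠ M →
    E (i - 1) * (E i * E i) - (Complex.exp ℏ + Complex.exp (-ℏ)) • (E i * (E (i - 1) * E i)) +
      E i * E i * E (i - 1) = 0
  serre_F_down : ∀ i, 2 ≤ i → i < M + N → i ≠ M →
    F i * F i * F (i - 1) - (Complex.exp ℏ + Complex.exp (-ℏ)) • (F i * (F (i - 1) * F i)) +
      F (i - 1) * (F i * F i) = 0
  serre_E_up : ∀ i, 1 ≤ i → i + 1 < M + N → i ≠ M →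
    E i * E i * E (i + 1) - (Complex.exp ℏ + Complex.exp (-ℏ)) • (E i * (E (i + 1) * E i)) +
      E (i + 1) * (E i * E i) = 0
  serre_F_up : ∀ i, 1 ≤ i → i + 1 < M + N → i ≠ M →
    F (i + 1) * (F i * F i) - (Complex.exp ℏ + Complex.exp (-ℏ)) • (F i * (F (i + 1) * F i)) +
      F i * F i * F (i + 1) = 0
  /-- the quartic Serre relation `⟦⟦⟦E_{M-1}, E_M⟧, E_{M+1}⟧, E_M⟧ = 0`. -/
  serre_quartic_E : 2 ≤ M → 2 ≤ N →
    ((E (M - 1) * E M - Complex.exp ℏ • (E M * E (M - 1))) * E (M + 1) -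
          Complex.exp (-ℏ) •
            (E (M + 1) * (E (M - 1) * E M - Complex.exp ℏ • (E M * E (M - 1))))) * E M +
      E M * ((E (M - 1) * E M - Complex.exp ℏ • (E M * E (M - 1))) * E (M + 1) -
          Complex.exp (-ℏ) •
            (E (M + 1) * (E (M - 1) * E M - Complex.exp ℏ • (E M * E (M - 1))))) = 0
  /-- the quartic Serre relation `⟦F_M, ⟦F_{M+1}, ⟦F_M, F_{M-1}⟧⟧⟧ = 0`. -/
  serre_quartic_F : 2 ≤ M → 2 ≤ N →
    F M * (F (M + 1) * (F M * F (M - 1) - Complex.exp (-ℏ) • (F (M - 1) * F M)) -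
          Complex.exp ℏ •
            ((F M * F (M - 1) - Complex.exp (-ℏ) • (F (M - 1) * F M)) * F (M + 1))) +
      (F (M + 1) * (F M * F (M - 1) - Complex.exp (-ℏ) • (F (M - 1) * F M)) -
          Complex.exp ℏ •
            ((F M * F (M - 1) - Complex.exp (-ℏ) • (F (M - 1) * F M)) * F (M + 1))) * F M = 0

variable {M N : ℕ} {A : Type*} [Ring A] [Algebra ℂ A]

/-- `Eaux i g` is the composite root vector `E_{i, i+1+g}`, defined by the recursion
`E_{i,i+1} = E_i`, `E_{i,j+1} = E_{ij} E_{j,j+1} - q_j E_{j,j+1} E_{ij}` with `q_j = q^{d_j}`. -/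
def UqGL.Eaux (U : UqGL M N A) (i : ℕ) : ℕ → A
  | 0 => U.E i
  | g + 1 => U.Eaux i g * U.E (i + 1 + g) -
      Complex.exp (U.ℏ * (dd M (i + 1 + g) : ℂ)) • (U.E (i + 1 + g) * U.Eaux i g)

/-- `Faux i g` is the composite root vector `F_{i, i+1+g}`, defined by the recursion
`F_{i,i+1} = F_i`, `F_{i,j+1} = F_{j,j+1} F_{ij} - q_j⁻¹ F_{ij} F_{j,j+1}`. -/
def UqGL.Faux (U : UqGL M N A) (i : ℕ) : ℕ → A
  | 0 => U.F i
  | g + 1 => U.F (i + 1 + g) * U.Faux i g -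
      Complex.exp (-(U.ℏ * (dd M (i + 1 + g) : ℂ))) • (U.Faux i g * U.F (i + 1 + g))

/-- The composite root vector `E_{ij}` for `1 ≤ i < j ≤ M + N`. -/
def UqGL.Ec (U : UqGL M N A) (i j : ℕ) : A := U.Eaux i (j - i - 1)

/-- The composite root vector `F_{ij}` for `1 ≤ i < j ≤ M + N`. -/
def UqGL.Fc (U : UqGL M N A) (i j : ℕ) : A := U.Faux i (j - i - 1)

section Helpers

open Complex

/-! ### Scalar lemmas -/

lemma exp_mul_exp_neg (w : ℂ) : Complex.exp w * Complex.exp (-w) = 1 := by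
  rw [← Complex.exp_add, add_neg_cancel, Complex.exp_zero]

lemma eq_exp_smul_symm {w : ℂ} {a b : A} (h : a = Complex.exp w • b) :
    b = Complex.exp (-w) • a := by
  rw [h, smul_smul, ← Complex.exp_add, neg_add_cancel, Complex.exp_zero, one_smul]

lemma dd_cases (M k : ℕ) : (dd M k : ℂ) = 1 ∨ (dd M k : ℂ) = -1 := by
  unfold dd; split_ifs <;> simp

lemma exp_sub_exp_neg_ne (U : UqGL M N A) (k : ℕ) :
    Complex.exp (U.ℏ * (dd M k : ℂ)) - Complex.exp (-(U.ℏ * (dd M k : ℂ))) ≠ 0 := by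
  intro h
  apply U.q_ne_one
  have h2 : Complex.exp (U.ℏ * (dd M k : ℂ)) = Complex.exp (-(U.ℏ * (dd M k : ℂ))) :=
    sub_eq_zero.mp h
  have h3 : Complex.exp (2 * (U.ℏ * (dd M k : ℂ))) = 1 := by
    rw [two_mul, Complex.exp_add]
    nth_rewrite 2 [h2]
    exact exp_mul_exp_neg _
  rcases dd_cases M k with hd | hd <;> rw [hd] at h3
  · simpa [mul_assoc, mul_comm] using h3
  · have : Complex.exp (2 * U.ℏ) * Complex.exp (2 * (U.ℏ * (-1 : ℂ))) = 1 := by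
      rw [← Complex.exp_add]
      convert Complex.exp_zero using 2
      ring
    rw [h3, mul_one] at this
    exact this

lemma par_even {k : ℕ} (hk : k ≠ M) : Even (par M k + par M (k + 1)) := by
  unfold par
  split_ifs with h1 h2 h2
  · exact ⟨0, rfl⟩
  · omega
  · omega
  · exact ⟨1, rfl⟩

lemma neg_one_pow_sq_eq (a : ℕ) : ((-1 : ℂ)) ^ (a * a) = (-1 : ℂ) ^ a := by
  rcases Nat.even_or_odd a with h | h
  · rw [(h.mul_right a).neg_one_pow, h.neg_one_pow]
  · rw [(h.mul h).neg_one_pow, h.neg_one_pow]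

lemma neg_one_pow_split (a b c : ℕ) :
    ((-1 : ℂ)) ^ (a + c) = (-1 : ℂ) ^ (a + b) * (-1 : ℂ) ^ (b + c) := by
  calc ((-1 : ℂ)) ^ (a + c) = (-1 : ℂ) ^ (a + c) * ((-1 : ℂ) ^ 2) ^ b := by
        rw [neg_one_sq, one_pow, mul_one]
    _ = (-1 : ℂ) ^ (a + c + 2 * b) := by rw [← pow_mul, ← pow_add]
    _ = (-1 : ℂ) ^ (a + b + (b + c)) := by congr 1; omega
    _ = _ := pow_add _ _ _

/-! ### Generator-level relations -/

lemma commute_E_F (U : UqGL M N A) {s k : ℕ} (h1 : 1 ≤ s) (h2 : s < M + N) (h3 : 1 ≤ k)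
    (h4 : k < M + N) (hne : s ≠ k) : Commute (U.E s) (U.F k) := by
  have h := U.EF s k h1 h2 h3 h4
  rw [if_neg hne] at h
  have hev : Even ((par M s + par M (s + 1)) * (par M k + par M (k + 1))) := by
    rcases eq_or_ne s M with rfl | hs
    · exact (par_even (Ne.symm hne)).mul_left _
    · exact (par_even hs).mul_right _
  rw [hev.neg_one_pow, one_smul, sub_eq_zero] at h
  exact h

lemma E_F_same (U : UqGL M N A) (k : ℕ) (h1 : 1 ≤ k) (h2 : k < M + N) :
    U.E k * U.F k = ((-1 : ℂ) ^ (par M k + par M (k + 1))) • (U.F k * U.E k) +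
      (Complex.exp (U.ℏ * (dd M k : ℂ)) - Complex.exp (-(U.ℏ * (dd M k : ℂ))))⁻¹ •
        (U.K k (dd M k : ℂ) * U.K (k + 1) (-(dd M (k + 1) : ℂ)) -
          U.K k (-(dd M k : ℂ)) * U.K (k + 1) (dd M (k + 1) : ℂ)) := by
  have h := U.EF k k h1 h2 h1 h2
  rw [if_pos rfl, neg_one_pow_sq_eq] at h
  exact sub_eq_iff_eq_add'.mp h

/-! ### `K` versus composite root vectors -/

lemma quasi_pair {k a b : A} {z1 z2 c : ℂ}
    (ha : k * a = z1 • (a * k)) (hb : k * b = z2 • (b * k)) :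
    k * (a * b - c • (b * a)) = (z1 * z2) • ((a * b - c • (b * a)) * k) := by
  have h1 : k * (a * b) = (z1 * z2) • (a * (b * k)) := by
    rw [← mul_assoc, ha, smul_mul_assoc, mul_assoc, hb, mul_smul_comm, smul_smul]
  have h2 : k * (b * a) = (z1 * z2) • (b * (a * k)) := by
    rw [← mul_assoc, hb, smul_mul_assoc, mul_assoc, ha, mul_smul_comm, smul_smul, mul_comm z2]
  rw [mul_sub, mul_smul_comm, h1, h2]
  simp only [sub_mul, smul_sub, smul_mul_assoc, smul_smul, mul_assoc]
  module

lemma K_Eaux (U : UqGL M N A) (s : ℕ) (ν : ℂ) (i : ℕ) : ∀ g,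
    U.K s ν * U.Eaux i g =
      Complex.exp (U.ℏ * ν *
          ((if s = i then 1 else 0) - (if s = i + 1 + g then (1 : ℂ) else 0))) •
        (U.Eaux i g * U.K s ν)
  | 0 => by simpa [UqGL.Eaux] using U.K_E s i ν
  | (g + 1) => by
    have hA := K_Eaux U s ν i g
    have hB := U.K_E s (i + 1 + g) ν
    have := quasi_pair (c := Complex.exp (U.ℏ * (dd M (i + 1 + g) : ℂ))) hA hB
    rw [← Complex.exp_add] at this
    show U.K s ν * (U.Eaux i g * U.E (i + 1 + g) -
        Complex.exp (U.ℏ * (dd M (i + 1 + g) : ℂ)) • (U.E (i + 1 + g) * U.Eaux i g)) = _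
    rw [this]
    congr 2
    have : i + 1 + (g + 1) = (i + 1 + g) + 1 := by omega
    rw [this]
    ring

lemma K_Faux (U : UqGL M N A) (s : ℕ) (ν : ℂ) (i : ℕ) : ∀ g,
    U.K s ν * U.Faux i g =
      Complex.exp (-(U.ℏ * ν *
          ((if s = i then 1 else 0) - (if s = i + 1 + g then (1 : ℂ) else 0)))) •
        (U.Faux i g * U.K s ν)
  | 0 => by simpa [UqGL.Faux] using U.K_F s i ν
  | (g + 1) => by
    have hA := K_Faux U s ν i g
    have hB := U.K_F s (i + 1 + g) ν
    have := quasi_pair (c := Complex.exp (-(U.ℏ * (dd M (i + 1 + g) : ℂ)))) hB hA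
    rw [← Complex.exp_add] at this
    show U.K s ν * (U.F (i + 1 + g) * U.Faux i g -
        Complex.exp (-(U.ℏ * (dd M (i + 1 + g) : ℂ))) • (U.Faux i g * U.F (i + 1 + g))) = _
    rw [this]
    congr 2
    have : i + 1 + (g + 1) = (i + 1 + g) + 1 := by omega
    rw [this]
    ring

/-! ### Commutation of generators with composite root vectors -/

lemma commute_E_Faux (U : UqGL M N A) {k i : ℕ} (hk1 : 1 ≤ k) (hk2 : k < M + N)
    (hi : 1 ≤ i) : ∀ g, i + g < M + N → (k < i ∨ i + g < k) →
    Commute (U.E k) (U.Faux i g)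
  | 0, hr, hc => commute_E_F U hk1 hk2 hi (by omega) (by omega)
  | (g + 1), hr, hc => by
    have h1 : Commute (U.E k) (U.Faux i g) :=
      commute_E_Faux U hk1 hk2 hi g (by omega) (by omega)
    have h2 : Commute (U.E k) (U.F (i + 1 + g)) :=
      commute_E_F U hk1 hk2 (by omega) (by omega) (by omega)
    show Commute _ (U.F (i + 1 + g) * U.Faux i g - _ • (U.Faux i g * U.F (i + 1 + g)))
    exact ((h2.mul_right h1).sub_right ((h1.mul_right h2).smul_right _))

lemma commute_F_Eaux (U : UqGL M N A) {k i : ℕ} (hk1 : 1 ≤ k) (hk2 : k < M + N)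
    (hi : 1 ≤ i) : ∀ g, i + g < M + N → (k < i ∨ i + g < k) →
    Commute (U.F k) (U.Eaux i g)
  | 0, hr, hc => (commute_E_F U hi (by omega) hk1 hk2 (by omega)).symm
  | (g + 1), hr, hc => by
    have h1 : Commute (U.F k) (U.Eaux i g) :=
      commute_F_Eaux U hk1 hk2 hi g (by omega) (by omega)
    have h2 : Commute (U.F k) (U.E (i + 1 + g)) :=
      (commute_E_F U (by omega) (by omega) hk1 hk2 (by omega)).symm
    show Commute _ (U.Eaux i g * U.E (i + 1 + g) - _ • (U.E (i + 1 + g) * U.Eaux i g))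
    exact ((h1.mul_right h2).sub_right ((h2.mul_right h1).smul_right _))

lemma commute_E_Eaux (U : UqGL M N A) {k i : ℕ} (hk2 : k < M + N) (hi : 1 ≤ i) :
    ∀ g, i + g + 1 < k → Commute (U.E k) (U.Eaux i g)
  | 0, hc => (U.EE_far i k hi hk2 (by omega)).symm
  | (g + 1), hc => by
    have h1 : Commute (U.E k) (U.Eaux i g) := commute_E_Eaux U hk2 hi g (by omega)
    have h2 : Commute (U.E k) (U.E (i + 1 + g)) :=
      (U.EE_far (i + 1 + g) k (by omega) hk2 (by omega)).symm
    show Commute _ (U.Eaux i g * U.E (i + 1 + g) - _ • (U.E (i + 1 + g) * U.Eaux i g))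
    exact ((h1.mul_right h2).sub_right ((h2.mul_right h1).smul_right _))

lemma commute_F_Faux (U : UqGL M N A) {k i : ℕ} (hk2 : k < M + N) (hi : 1 ≤ i) :
    ∀ g, i + g + 1 < k → Commute (U.F k) (U.Faux i g)
  | 0, hc => (U.FF_far i k hi hk2 (by omega)).symm
  | (g + 1), hc => by
    have h1 : Commute (U.F k) (U.Faux i g) := commute_F_Faux U hk2 hi g (by omega)
    have h2 : Commute (U.F k) (U.F (i + 1 + g)) :=
      (U.FF_far (i + 1 + g) k (by omega) hk2 (by omega)).symm
    show Commute _ (U.F (i + 1 + g) * U.Faux i g - _ • (U.Faux i g * U.F (i + 1 + g)))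
    exact ((h2.mul_right h1).sub_right ((h1.mul_right h2).smul_right _))

/-! ### Parametrized rewriting helpers -/

lemma comm_param {a b : A} (h : a * b = b * a) (x : A) : a * (b * x) = b * (a * x) := by
  rw [← mul_assoc, h, mul_assoc]

lemma qcomm_param {a b : A} {z : ℂ} (h : a * b = z • (b * a)) (x : A) :
    a * (b * x) = z • (b * (a * x)) := by
  rw [← mul_assoc, h, smul_mul_assoc, mul_assoc]

lemma split_param {e f kp km : A} {s c : ℂ} (h : e * f = s • (f * e) + c • (kp - km))
    (x : A) : e * (f * x) = s • (f * (e * x)) + c • (kp * x) - c • (km * x) := by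
  rw [← mul_assoc, h, add_mul, smul_mul_assoc, smul_mul_assoc, mul_assoc, sub_mul,
    smul_sub]
  abel

lemma ih_param {X Y Z lam : A} {σ : ℂ} (h : X * Y = σ • (Y * X) + lam * Z) (x : A) :
    X * (Y * x) = σ • (Y * (X * x)) + lam * (Z * x) := by
  rw [← mul_assoc, h, add_mul, smul_mul_assoc, mul_assoc, mul_assoc]

/-! ### Abstract computational lemmas -/

lemma abs_base1 (X e f kp km : A) (s q : ℂ) (hq0 : q ≠ 0) (hqq : q - q⁻¹ ≠ 0)
    (hXf : X * f = f * X)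
    (hef : e * f = s • (f * e) + (q - q⁻¹)⁻¹ • (kp - km))
    (hkpX : kp * X = q⁻¹ • (X * kp))
    (hkmX : km * X = q • (X * km)) :
    (X * e - q • (e * X)) * f - s • (f * (X * e - q • (e * X))) = km * X := by
  simp only [sub_mul, mul_sub, smul_mul_assoc, mul_smul_comm, smul_sub, smul_add,
    add_mul, mul_add, smul_smul, mul_assoc, split_param hef, hef,
    comm_param hXf, hXf, qcomm_param hkpX, hkpX, qcomm_param hkmX, hkmX]
  have hqq' : (q ^ 2 - 1 : ℂ) ≠ 0 := by
    have key : (q ^ 2 - 1 : ℂ) = (q - q⁻¹) * q := by field_simp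
    exact key ▸ mul_ne_zero hqq hq0
  have hA : ((-1 : ℂ) + q ^ 2) ≠ 0 := fun h => hqq' (by linear_combination h)
  have hB : ((-q + q ^ 3 : ℂ)) ≠ 0 := by
    have key : (-q + q ^ 3 : ℂ) = q * (q ^ 2 - 1) := by ring
    exact key ▸ mul_ne_zero hq0 hqq'
  have hA2 : (q * q - 1 : ℂ) ≠ 0 := fun h => hqq' (by linear_combination h)
  have hA3 : (1 - q * q : ℂ) ≠ 0 := fun h => hqq' (by linear_combination -h)
  match_scalars <;> first
    | ring1
    | (field_simp [hA, hB, hA2, hA3]; ring1)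
    | (field_simp [hA, hB, hA2, hA3])

lemma abs_base2 (Y e f kp km : A) (s q : ℂ) (hq0 : q ≠ 0) (hqq : q - q⁻¹ ≠ 0)
    (heY : e * Y = Y * e)
    (hef : e * f = s • (f * e) + (q - q⁻¹)⁻¹ • (kp - km))
    (hkpY : kp * Y = q • (Y * kp))
    (hkmY : km * Y = q⁻¹ • (Y * km)) :
    e * (f * Y - q⁻¹ • (Y * f)) - s • ((f * Y - q⁻¹ • (Y * f)) * e) = Y * kp := by
  simp only [sub_mul, mul_sub, smul_mul_assoc, mul_smul_comm, smul_sub, smul_add,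
    add_mul, mul_add, smul_smul, mul_assoc, split_param hef, hef,
    comm_param heY, heY, qcomm_param hkpY, hkpY, qcomm_param hkmY, hkmY]
  have hqq' : (q ^ 2 - 1 : ℂ) ≠ 0 := by
    have key : (q ^ 2 - 1 : ℂ) = (q - q⁻¹) * q := by field_simp
    exact key ▸ mul_ne_zero hqq hq0
  have hA : ((-1 : ℂ) + q ^ 2) ≠ 0 := fun h => hqq' (by linear_combination h)
  have hB : ((-q + q ^ 3 : ℂ)) ≠ 0 := by
    have key : (-q + q ^ 3 : ℂ) = q * (q ^ 2 - 1) := by ring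
    exact key ▸ mul_ne_zero hq0 hqq'
  have hA2 : (q * q - 1 : ℂ) ≠ 0 := fun h => hqq' (by linear_combination h)
  have hA3 : (1 - q * q : ℂ) ≠ 0 := fun h => hqq' (by linear_combination -h)
  match_scalars <;> first
    | ring1
    | (field_simp [hA, hB, hA2, hA3]; ring1)
    | (field_simp [hA, hB, hA2, hA3])

set_option maxHeartbeats 4000000 in
lemma abs_step1 (X Y Z e f kp km lam : A) (s σ q : ℂ) (hq0 : q ≠ 0)
    (hqq : q - q⁻¹ ≠ 0)
    (hXY : X * Y = σ • (Y * X) + lam * Z)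
    (heY : e * Y = Y * e)
    (hXf : X * f = f * X)
    (hef : e * f = s • (f * e) + (q - q⁻¹)⁻¹ • (kp - km))
    (hkpY : kp * Y = q • (Y * kp))
    (hkmY : km * Y = q⁻¹ • (Y * km))
    (hkpX : kp * X = q⁻¹ • (X * kp))
    (hkmX : km * X = q • (X * km))
    (hlame : lam * e = q • (e * lam))
    (hlamf : lam * f = q⁻¹ • (f * lam))
    (hZe : Z * e = e * Z)
    (hZf : Z * f = f * Z)
    (hZkp : Z * kp = kp * Z)
    (hZkm : Z * km = km * Z)
    (hlamkp : lam * kp = kp * lam)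
    (hlamkm : lam * km = km * lam) :
    (X * e - q • (e * X)) * (f * Y - q⁻¹ • (Y * f)) -
        (σ * s) • ((f * Y - q⁻¹ • (Y * f)) * (X * e - q • (e * X))) = km * (lam * Z) := by
  simp only [sub_mul, mul_sub, smul_mul_assoc, mul_smul_comm, smul_sub, smul_add,
    add_mul, mul_add, smul_smul, mul_assoc,
    ih_param hXY, hXY, split_param hef, hef,
    comm_param heY, heY, comm_param hXf, hXf,
    qcomm_param hkpY, hkpY, qcomm_param hkmY, hkmY,
    qcomm_param hkpX, hkpX, qcomm_param hkmX, hkmX,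
    qcomm_param hlame, hlame, qcomm_param hlamf, hlamf,
    comm_param hZe, hZe, comm_param hZf, hZf,
    comm_param hZkp, hZkp, comm_param hZkm, hZkm,
    comm_param hlamkp, hlamkp, comm_param hlamkm, hlamkm]
  have hqq' : (q ^ 2 - 1 : ℂ) ≠ 0 := by
    have key : (q ^ 2 - 1 : ℂ) = (q - q⁻¹) * q := by field_simp
    exact key ▸ mul_ne_zero hqq hq0
  have hA : ((-1 : ℂ) + q ^ 2) ≠ 0 := fun h => hqq' (by linear_combination h)
  have hB : ((-q + q ^ 3 : ℂ)) ≠ 0 := by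
    have key : (-q + q ^ 3 : ℂ) = q * (q ^ 2 - 1) := by ring
    exact key ▸ mul_ne_zero hq0 hqq'
  have hA2 : (q * q - 1 : ℂ) ≠ 0 := fun h => hqq' (by linear_combination h)
  have hA3 : (1 - q * q : ℂ) ≠ 0 := fun h => hqq' (by linear_combination -h)
  match_scalars <;> first
    | ring1
    | (field_simp [hA, hB, hA2, hA3]; ring1)
    | (field_simp [hA, hB, hA2, hA3])

set_option maxHeartbeats 4000000 in
lemma abs_step2 (X Y Z e f kp km lam : A) (s σ q : ℂ) (hq0 : q ≠ 0)
    (hqq : q - q⁻¹ ≠ 0)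
    (hXY : X * Y = σ • (Y * X) + Z * lam)
    (heY : e * Y = Y * e)
    (hXf : X * f = f * X)
    (hef : e * f = s • (f * e) + (q - q⁻¹)⁻¹ • (kp - km))
    (hkpY : kp * Y = q • (Y * kp))
    (hkmY : km * Y = q⁻¹ • (Y * km))
    (hkpX : kp * X = q⁻¹ • (X * kp))
    (hkmX : km * X = q • (X * km))
    (hlame : lam * e = q⁻¹ • (e * lam))
    (hlamf : lam * f = q • (f * lam))
    (hZe : Z * e = e * Z)
    (hZf : Z * f = f * Z)
    (hkpZ : kp * Z = Z * kp)
    (hkmZ : km * Z = Z * km)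
    (hlamkp : lam * kp = kp * lam)
    (hlamkm : lam * km = km * lam) :
    (X * e - q • (e * X)) * (f * Y - q⁻¹ • (Y * f)) -
        (σ * s) • ((f * Y - q⁻¹ • (Y * f)) * (X * e - q • (e * X))) = Z * (kp * lam) := by
  simp only [sub_mul, mul_sub, smul_mul_assoc, mul_smul_comm, smul_sub, smul_add,
    add_mul, mul_add, smul_smul, mul_assoc,
    ih_param hXY, hXY, split_param hef, hef,
    comm_param heY, heY, comm_param hXf, hXf,
    qcomm_param hkpY, hkpY, qcomm_param hkmY, hkmY,
    qcomm_param hkpX, hkpX, qcomm_param hkmX, hkmX,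
    qcomm_param hlame, hlame, qcomm_param hlamf, hlamf,
    comm_param hZe, hZe, comm_param hZf, hZf,
    comm_param hkpZ, hkpZ, comm_param hkmZ, hkmZ,
    comm_param hlamkp, hlamkp, comm_param hlamkm, hlamkm]
  have hqq' : (q ^ 2 - 1 : ℂ) ≠ 0 := by
    have key : (q ^ 2 - 1 : ℂ) = (q - q⁻¹) * q := by field_simp
    exact key ▸ mul_ne_zero hqq hq0
  have hA : ((-1 : ℂ) + q ^ 2) ≠ 0 := fun h => hqq' (by linear_combination h)
  have hB : ((-q + q ^ 3 : ℂ)) ≠ 0 := by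
    have key : (-q + q ^ 3 : ℂ) = q * (q ^ 2 - 1) := by ring
    exact key ▸ mul_ne_zero hq0 hqq'
  have hA2 : (q * q - 1 : ℂ) ≠ 0 := fun h => hqq' (by linear_combination h)
  have hA3 : (1 - q * q : ℂ) ≠ 0 := fun h => hqq' (by linear_combination -h)
  match_scalars <;> first
    | ring1
    | (field_simp [hA, hB, hA2, hA3]; ring1)
    | (field_simp [hA, hB, hA2, hA3])

/-! ### Evaluated `K`-commutation corollaries -/

lemma pair_mul {k1 k2 y : A} {z1 z2 : ℂ} (h1 : k1 * y = z1 • (y * k1))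
    (h2 : k2 * y = z2 • (y * k2)) :
    (k1 * k2) * y = (z1 * z2) • (y * (k1 * k2)) := by
  rw [mul_assoc, h2, mul_smul_comm, ← mul_assoc, h1, smul_mul_assoc, smul_smul,
    mul_comm z2 z1, mul_assoc]

lemma K_Eaux_top (U : UqGL M N A) (ν : ℂ) (i g : ℕ) :
    U.K (i + 1 + g) ν * U.Eaux i g =
      Complex.exp (-(U.ℏ * ν)) • (U.Eaux i g * U.K (i + 1 + g) ν) := by
  have h := K_Eaux U (i + 1 + g) ν i g
  rw [if_neg (by omega : ¬(i + 1 + g = i)), if_pos rfl,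
    show U.ℏ * ν * ((0 : ℂ) - 1) = -(U.ℏ * ν) by ring] at h
  exact h

lemma K_Eaux_low (U : UqGL M N A) (ν : ℂ) (i g : ℕ) :
    U.K i ν * U.Eaux i g = Complex.exp (U.ℏ * ν) • (U.Eaux i g * U.K i ν) := by
  have h := K_Eaux U i ν i g
  rw [if_pos rfl, if_neg (by omega : ¬(i = i + 1 + g)),
    show U.ℏ * ν * ((1 : ℂ) - 0) = U.ℏ * ν by ring] at h
  exact h

lemma K_Eaux_out (U : UqGL M N A) (s : ℕ) (ν : ℂ) {i g : ℕ} (h1 : s ≠ i)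
    (h2 : s ≠ i + 1 + g) : Commute (U.K s ν) (U.Eaux i g) := by
  have h := K_Eaux U s ν i g
  rw [if_neg h1, if_neg h2] at h
  simp at h; exact h

lemma K_Faux_top (U : UqGL M N A) (ν : ℂ) (i g : ℕ) :
    U.K (i + 1 + g) ν * U.Faux i g =
      Complex.exp (U.ℏ * ν) • (U.Faux i g * U.K (i + 1 + g) ν) := by
  have h := K_Faux U (i + 1 + g) ν i g
  rw [if_neg (by omega : ¬(i + 1 + g = i)), if_pos rfl,
    show -(U.ℏ * ν * ((0 : ℂ) - 1)) = U.ℏ * ν by ring] at h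
  exact h

lemma K_Faux_low (U : UqGL M N A) (ν : ℂ) (i g : ℕ) :
    U.K i ν * U.Faux i g = Complex.exp (-(U.ℏ * ν)) • (U.Faux i g * U.K i ν) := by
  have h := K_Faux U i ν i g
  rw [if_pos rfl, if_neg (by omega : ¬(i = i + 1 + g)),
    show -(U.ℏ * ν * ((1 : ℂ) - 0)) = -(U.ℏ * ν) by ring] at h
  exact h

lemma K_Faux_out (U : UqGL M N A) (s : ℕ) (ν : ℂ) {i g : ℕ} (h1 : s ≠ i)
    (h2 : s ≠ i + 1 + g) : Commute (U.K s ν) (U.Faux i g) := by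
  have h := K_Faux U s ν i g
  rw [if_neg h1, if_neg h2] at h
  simp at h; exact h

lemma K_E_self (U : UqGL M N A) (ν : ℂ) (j : ℕ) :
    U.K j ν * U.E j = Complex.exp (U.ℏ * ν) • (U.E j * U.K j ν) := by
  have h := U.K_E j j ν
  rw [if_pos rfl, if_neg (by omega : ¬(j = j + 1)),
    show U.ℏ * ν * ((1 : ℂ) - 0) = U.ℏ * ν by ring] at h
  exact h

lemma K_E_out (U : UqGL M N A) (s : ℕ) (ν : ℂ) {j : ℕ} (h1 : s ≠ j) (h2 : s ≠ j + 1) :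
    Commute (U.K s ν) (U.E j) := by
  have h := U.K_E s j ν
  rw [if_neg h1, if_neg h2] at h
  simp at h; exact h

lemma K_F_self (U : UqGL M N A) (ν : ℂ) (j : ℕ) :
    U.K j ν * U.F j = Complex.exp (-(U.ℏ * ν)) • (U.F j * U.K j ν) := by
  have h := U.K_F j j ν
  rw [if_pos rfl, if_neg (by omega : ¬(j = j + 1)),
    show -(U.ℏ * ν * ((1 : ℂ) - 0)) = -(U.ℏ * ν) by ring] at h
  exact h

lemma K_F_out (U : UqGL M N A) (s : ℕ) (ν : ℂ) {j : ℕ} (h1 : s ≠ j) (h2 : s ≠ j + 1) :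
    Commute (U.K s ν) (U.F j) := by
  have h := U.K_F s j ν
  rw [if_neg h1, if_neg h2] at h
  simp at h; exact h

lemma K_collapse2 (U : UqGL M N A) (a b c : ℕ) (α β γ γ' : ℂ) (h : γ + γ' = 0) :
    (U.K c γ * U.K b β) * (U.K a α * U.K c γ') = U.K a α * U.K b β := by
  simp only [mul_assoc]
  rw [comm_param (U.K_comm c b γ β), comm_param (U.K_comm c a γ α), U.K_add, h,
    U.K_zero, mul_one, U.K_comm b a]

lemma comm_to_smul {a b : A} (h : Commute a b) : a * b = (1 : ℂ) • (b * a) := by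
  rw [one_smul]; exact h.eq

/-! ### The master inductions -/

lemma master1 (U : UqGL M N A) : ∀ g i h, 1 ≤ i → i + h + 2 + g ≤ M + N →
    U.Eaux i (h + 1 + g) * U.Faux (i + 1 + h) g -
        ((-1 : ℂ) ^ (par M (i + 1 + h) + par M (i + h + 2 + g))) •
          (U.Faux (i + 1 + h) g * U.Eaux i (h + 1 + g)) =
      U.K (i + 1 + h) (-(dd M (i + 1 + h) : ℂ)) *
        U.K (i + h + 2 + g) (dd M (i + h + 2 + g) : ℂ) * U.Eaux i h := by
  intro g
  induction g with
  | zero =>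
    intro i h hi hr
    rw [show i + h + 2 + 0 = i + 1 + h + 1 by omega]
    simp only [Nat.add_zero, UqGL.Eaux, UqGL.Faux]
    have hm1 : 1 ≤ i + 1 + h := by omega
    have hm2 : i + 1 + h < M + N := by omega
    have hq0 : Complex.exp (U.ℏ * (dd M (i + 1 + h) : ℂ)) ≠ 0 := Complex.exp_ne_zero _
    have hqq := exp_sub_exp_neg_ne U (i + 1 + h)
    rw [Complex.exp_neg] at hqq
    have hef := E_F_same U (i + 1 + h) hm1 hm2
    rw [Complex.exp_neg] at hef
    have hXf : U.Eaux i h * U.F (i + 1 + h) = U.F (i + 1 + h) * U.Eaux i h :=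
      (commute_F_Eaux U hm1 hm2 hi h (by omega) (by omega)).symm.eq
    have hkpX := pair_mul (K_Eaux_top U (dd M (i + 1 + h) : ℂ) i h)
      (comm_to_smul (K_Eaux_out U (i + 1 + h + 1) (-(dd M (i + 1 + h + 1) : ℂ))
        (by omega) (by omega)))
    rw [mul_one, Complex.exp_neg] at hkpX
    have hkmX := pair_mul (K_Eaux_top U (-(dd M (i + 1 + h) : ℂ)) i h)
      (comm_to_smul (K_Eaux_out U (i + 1 + h + 1) ((dd M (i + 1 + h + 1) : ℂ))
        (by omega) (by omega)))
    rw [mul_one, mul_neg, neg_neg] at hkmX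
    exact abs_base1 _ _ _ _ _ _ _ hq0 hqq hXf hef hkpX hkmX
  | succ g ih =>
    intro i h hi hr
    have hIH := ih i h hi (by omega)
    have hXY := sub_eq_iff_eq_add'.mp hIH
    have hj1 : 1 ≤ i + h + 2 + g := by omega
    have hj2 : i + h + 2 + g < M + N := by omega
    have hq0 : Complex.exp (U.ℏ * (dd M (i + h + 2 + g) : ℂ)) ≠ 0 := Complex.exp_ne_zero _
    have hqq := exp_sub_exp_neg_ne U (i + h + 2 + g)
    rw [Complex.exp_neg] at hqq
    have hef := E_F_same U (i + h + 2 + g) hj1 hj2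
    rw [Complex.exp_neg] at hef
    have heY : U.E (i + h + 2 + g) * U.Faux (i + 1 + h) g =
        U.Faux (i + 1 + h) g * U.E (i + h + 2 + g) :=
      (commute_E_Faux U hj1 hj2 (by omega) g (by omega) (by omega)).eq
    have hXf : U.Eaux i (h + 1 + g) * U.F (i + h + 2 + g) =
        U.F (i + h + 2 + g) * U.Eaux i (h + 1 + g) :=
      (commute_F_Eaux U hj1 hj2 hi (h + 1 + g) (by omega) (by omega)).symm.eq
    -- kp/km versus Y
    have hkpY := pair_mul (K_Faux_top U (dd M (i + h + 2 + g) : ℂ) (i + 1 + h) g)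
      (comm_to_smul (K_Faux_out U (i + h + 2 + g + 1) (-(dd M (i + h + 2 + g + 1) : ℂ))
        (by omega) (by omega)))
    rw [show i + 1 + h + 1 + g = i + h + 2 + g by omega, mul_one] at hkpY
    have hkmY := pair_mul (K_Faux_top U (-(dd M (i + h + 2 + g) : ℂ)) (i + 1 + h) g)
      (comm_to_smul (K_Faux_out U (i + h + 2 + g + 1) ((dd M (i + h + 2 + g + 1) : ℂ))
        (by omega) (by omega)))
    rw [show i + 1 + h + 1 + g = i + h + 2 + g by omega, mul_one, mul_neg,
      Complex.exp_neg] at hkmY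
    -- kp/km versus X
    have hkpX := pair_mul (K_Eaux_top U (dd M (i + h + 2 + g) : ℂ) i (h + 1 + g))
      (comm_to_smul (K_Eaux_out U (i + h + 2 + g + 1) (-(dd M (i + h + 2 + g + 1) : ℂ))
        (by omega) (by omega)))
    rw [show i + 1 + (h + 1 + g) = i + h + 2 + g by omega, mul_one, Complex.exp_neg] at hkpX
    have hkmX := pair_mul (K_Eaux_top U (-(dd M (i + h + 2 + g) : ℂ)) i (h + 1 + g))
      (comm_to_smul (K_Eaux_out U (i + h + 2 + g + 1) ((dd M (i + h + 2 + g + 1) : ℂ))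
        (by omega) (by omega)))
    rw [show i + 1 + (h + 1 + g) = i + h + 2 + g by omega, mul_one, mul_neg, neg_neg] at hkmX
    -- lam versus e and f
    have hlame := pair_mul
      (comm_to_smul (K_E_out U (i + 1 + h) (-(dd M (i + 1 + h) : ℂ))
        (by omega) (by omega) (j := i + h + 2 + g)))
      (K_E_self U (dd M (i + h + 2 + g) : ℂ) (i + h + 2 + g))
    rw [one_mul] at hlame
    have hlamf := pair_mul
      (comm_to_smul (K_F_out U (i + 1 + h) (-(dd M (i + 1 + h) : ℂ))
        (by omega) (by omega) (j := i + h + 2 + g)))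
      (K_F_self U (dd M (i + h + 2 + g) : ℂ) (i + h + 2 + g))
    rw [one_mul, Complex.exp_neg] at hlamf
    -- Z versus e, f, kp, km
    have hZe : U.Eaux i h * U.E (i + h + 2 + g) = U.E (i + h + 2 + g) * U.Eaux i h :=
      (commute_E_Eaux U hj2 hi h (by omega)).eq.symm
    have hZf : U.Eaux i h * U.F (i + h + 2 + g) = U.F (i + h + 2 + g) * U.Eaux i h :=
      (commute_F_Eaux U hj1 hj2 hi h (by omega) (by omega)).eq.symm
    have hZkp : U.Eaux i h * (U.K (i + h + 2 + g) (dd M (i + h + 2 + g) : ℂ) *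
        U.K (i + h + 2 + g + 1) (-(dd M (i + h + 2 + g + 1) : ℂ))) = _ :=
      ((K_Eaux_out U (i + h + 2 + g) (dd M (i + h + 2 + g) : ℂ) (by omega)
          (by omega : i + h + 2 + g ≠ i + 1 + h)).mul_left
        (K_Eaux_out U (i + h + 2 + g + 1) (-(dd M (i + h + 2 + g + 1) : ℂ)) (by omega)
          (by omega))).eq.symm
    have hZkm : U.Eaux i h * (U.K (i + h + 2 + g) (-(dd M (i + h + 2 + g) : ℂ)) *
        U.K (i + h + 2 + g + 1) ((dd M (i + h + 2 + g + 1) : ℂ))) = _ :=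
      ((K_Eaux_out U (i + h + 2 + g) (-(dd M (i + h + 2 + g) : ℂ)) (by omega)
          (by omega : i + h + 2 + g ≠ i + 1 + h)).mul_left
        (K_Eaux_out U (i + h + 2 + g + 1) ((dd M (i + h + 2 + g + 1) : ℂ)) (by omega)
          (by omega))).eq.symm
    have base : ∀ a b : ℕ, ∀ α β : ℂ, Commute (U.K a α) (U.K b β) := fun a b α β =>
      U.K_comm a b α β
    have hlamkp : (U.K (i + 1 + h) (-(dd M (i + 1 + h) : ℂ)) *
          U.K (i + h + 2 + g) (dd M (i + h + 2 + g) : ℂ)) *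
        (U.K (i + h + 2 + g) (dd M (i + h + 2 + g) : ℂ) *
          U.K (i + h + 2 + g + 1) (-(dd M (i + h + 2 + g + 1) : ℂ))) = _ :=
      (((base _ _ _ _).mul_right (base _ _ _ _)).mul_left
        ((base _ _ _ _).mul_right (base _ _ _ _))).eq
    have hlamkm : (U.K (i + 1 + h) (-(dd M (i + 1 + h) : ℂ)) *
          U.K (i + h + 2 + g) (dd M (i + h + 2 + g) : ℂ)) *
        (U.K (i + h + 2 + g) (-(dd M (i + h + 2 + g) : ℂ)) *
          U.K (i + h + 2 + g + 1) ((dd M (i + h + 2 + g + 1) : ℂ))) = _ :=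
      (((base _ _ _ _).mul_right (base _ _ _ _)).mul_left
        ((base _ _ _ _).mul_right (base _ _ _ _))).eq
    -- final K collapse
    have hfin : (U.K (i + h + 2 + g) (-(dd M (i + h + 2 + g) : ℂ)) *
          U.K (i + h + 2 + g + 1) (dd M (i + h + 2 + g + 1) : ℂ)) *
        ((U.K (i + 1 + h) (-(dd M (i + 1 + h) : ℂ)) *
          U.K (i + h + 2 + g) (dd M (i + h + 2 + g) : ℂ)) * U.Eaux i h) =
        U.K (i + 1 + h) (-(dd M (i + 1 + h) : ℂ)) *
          U.K (i + h + 2 + g + 1) (dd M (i + h + 2 + g + 1) : ℂ) * U.Eaux i h := by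
      rw [← mul_assoc, K_collapse2 U (i + 1 + h) (i + h + 2 + g + 1) (i + h + 2 + g)
        (-(dd M (i + 1 + h) : ℂ)) (dd M (i + h + 2 + g + 1) : ℂ)
        (-(dd M (i + h + 2 + g) : ℂ)) (dd M (i + h + 2 + g) : ℂ) (by ring)]
    -- now assemble the goal
    rw [show h + 1 + (g + 1) = h + 1 + g + 1 by omega]
    simp only [UqGL.Eaux, UqGL.Faux]
    rw [show i + 1 + (h + 1 + g) = i + h + 2 + g by omega,
      show i + 1 + h + 1 + g = i + h + 2 + g by omega,
      show i + h + 2 + (g + 1) = i + h + 2 + g + 1 by omega,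
      neg_one_pow_split (par M (i + 1 + h)) (par M (i + h + 2 + g))
        (par M (i + h + 2 + g + 1)),
      Complex.exp_neg, ← hfin]
    exact abs_step1 _ _ _ _ _ _ _ _ _ _ _ hq0 hqq hXY heY hXf hef hkpY hkmY hkpX hkmX
      hlame hlamf hZe hZf hZkp hZkm hlamkp hlamkm

lemma master2 (U : UqGL M N A) : ∀ g i h, 1 ≤ i → i + h + 2 + g ≤ M + N →
    U.Eaux (i + 1 + h) g * U.Faux i (h + 1 + g) -
        ((-1 : ℂ) ^ (par M (i + 1 + h) + par M (i + h + 2 + g))) •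
          (U.Faux i (h + 1 + g) * U.Eaux (i + 1 + h) g) =
      U.Faux i h * (U.K (i + 1 + h) (dd M (i + 1 + h) : ℂ) *
        U.K (i + h + 2 + g) (-(dd M (i + h + 2 + g) : ℂ))) := by
  intro g
  induction g with
  | zero =>
    intro i h hi hr
    rw [show i + h + 2 + 0 = i + 1 + h + 1 by omega]
    simp only [Nat.add_zero, UqGL.Eaux, UqGL.Faux]
    have hm1 : 1 ≤ i + 1 + h := by omega
    have hm2 : i + 1 + h < M + N := by omega
    have hq0 : Complex.exp (U.ℏ * (dd M (i + 1 + h) : ℂ)) ≠ 0 := Complex.exp_ne_zero _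
    have hqq := exp_sub_exp_neg_ne U (i + 1 + h)
    rw [Complex.exp_neg] at hqq
    have hef := E_F_same U (i + 1 + h) hm1 hm2
    rw [Complex.exp_neg] at hef
    have heY : U.E (i + 1 + h) * U.Faux i h = U.Faux i h * U.E (i + 1 + h) :=
      (commute_E_Faux U hm1 hm2 hi h (by omega) (by omega)).eq
    have hkpY := pair_mul (K_Faux_top U (dd M (i + 1 + h) : ℂ) i h)
      (comm_to_smul (K_Faux_out U (i + 1 + h + 1) (-(dd M (i + 1 + h + 1) : ℂ))
        (by omega) (by omega)))
    rw [mul_one] at hkpY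
    have hkmY := pair_mul (K_Faux_top U (-(dd M (i + 1 + h) : ℂ)) i h)
      (comm_to_smul (K_Faux_out U (i + 1 + h + 1) ((dd M (i + 1 + h + 1) : ℂ))
        (by omega) (by omega)))
    rw [mul_one, mul_neg, Complex.exp_neg] at hkmY
    rw [Complex.exp_neg]
    exact abs_base2 _ _ _ _ _ _ _ hq0 hqq heY hef hkpY hkmY
  | succ g ih =>
    intro i h hi hr
    have hIH := ih i h hi (by omega)
    have hXY := sub_eq_iff_eq_add'.mp hIH
    have hj1 : 1 ≤ i + h + 2 + g := by omega
    have hj2 : i + h + 2 + g < M + N := by omega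
    have hq0 : Complex.exp (U.ℏ * (dd M (i + h + 2 + g) : ℂ)) ≠ 0 := Complex.exp_ne_zero _
    have hqq := exp_sub_exp_neg_ne U (i + h + 2 + g)
    rw [Complex.exp_neg] at hqq
    have hef := E_F_same U (i + h + 2 + g) hj1 hj2
    rw [Complex.exp_neg] at hef
    have heY : U.E (i + h + 2 + g) * U.Faux i (h + 1 + g) =
        U.Faux i (h + 1 + g) * U.E (i + h + 2 + g) :=
      (commute_E_Faux U hj1 hj2 hi (h + 1 + g) (by omega) (by omega)).eq
    have hXf : U.Eaux (i + 1 + h) g * U.F (i + h + 2 + g) =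
        U.F (i + h + 2 + g) * U.Eaux (i + 1 + h) g :=
      (commute_F_Eaux U hj1 hj2 (by omega) g (by omega) (by omega)).symm.eq
    -- kp/km versus Y
    have hkpY := pair_mul (K_Faux_top U (dd M (i + h + 2 + g) : ℂ) i (h + 1 + g))
      (comm_to_smul (K_Faux_out U (i + h + 2 + g + 1) (-(dd M (i + h + 2 + g + 1) : ℂ))
        (by omega) (by omega)))
    rw [show i + 1 + (h + 1 + g) = i + h + 2 + g by omega, mul_one] at hkpY
    have hkmY := pair_mul (K_Faux_top U (-(dd M (i + h + 2 + g) : ℂ)) i (h + 1 + g))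
      (comm_to_smul (K_Faux_out U (i + h + 2 + g + 1) ((dd M (i + h + 2 + g + 1) : ℂ))
        (by omega) (by omega)))
    rw [show i + 1 + (h + 1 + g) = i + h + 2 + g by omega, mul_one, mul_neg,
      Complex.exp_neg] at hkmY
    -- kp/km versus X
    have hkpX := pair_mul (K_Eaux_top U (dd M (i + h + 2 + g) : ℂ) (i + 1 + h) g)
      (comm_to_smul (K_Eaux_out U (i + h + 2 + g + 1) (-(dd M (i + h + 2 + g + 1) : ℂ))
        (by omega) (by omega)))
    rw [show i + 1 + h + 1 + g = i + h + 2 + g by omega, mul_one, Complex.exp_neg] at hkpX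
    have hkmX := pair_mul (K_Eaux_top U (-(dd M (i + h + 2 + g) : ℂ)) (i + 1 + h) g)
      (comm_to_smul (K_Eaux_out U (i + h + 2 + g + 1) ((dd M (i + h + 2 + g + 1) : ℂ))
        (by omega) (by omega)))
    rw [show i + 1 + h + 1 + g = i + h + 2 + g by omega, mul_one, mul_neg, neg_neg] at hkmX
    -- lam versus e and f
    have hlame := pair_mul
      (comm_to_smul (K_E_out U (i + 1 + h) ((dd M (i + 1 + h) : ℂ))
        (by omega) (by omega) (j := i + h + 2 + g)))
      (K_E_self U (-(dd M (i + h + 2 + g) : ℂ)) (i + h + 2 + g))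
    rw [one_mul, mul_neg, Complex.exp_neg] at hlame
    have hlamf := pair_mul
      (comm_to_smul (K_F_out U (i + 1 + h) ((dd M (i + 1 + h) : ℂ))
        (by omega) (by omega) (j := i + h + 2 + g)))
      (K_F_self U (-(dd M (i + h + 2 + g) : ℂ)) (i + h + 2 + g))
    rw [one_mul, mul_neg, neg_neg] at hlamf
    -- Z versus e, f, kp, km
    have hZe : U.Faux i h * U.E (i + h + 2 + g) = U.E (i + h + 2 + g) * U.Faux i h :=
      (commute_E_Faux U hj1 hj2 hi h (by omega) (by omega)).eq.symm
    have hZf : U.Faux i h * U.F (i + h + 2 + g) = U.F (i + h + 2 + g) * U.Faux i h :=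
      (commute_F_Faux U hj2 hi h (by omega)).eq.symm
    have hkpZ : (U.K (i + h + 2 + g) (dd M (i + h + 2 + g) : ℂ) *
        U.K (i + h + 2 + g + 1) (-(dd M (i + h + 2 + g + 1) : ℂ))) * U.Faux i h = _ :=
      ((K_Faux_out U (i + h + 2 + g) (dd M (i + h + 2 + g) : ℂ) (by omega)
          (by omega : i + h + 2 + g ≠ i + 1 + h)).mul_left
        (K_Faux_out U (i + h + 2 + g + 1) (-(dd M (i + h + 2 + g + 1) : ℂ)) (by omega)
          (by omega))).eq
    have hkmZ : (U.K (i + h + 2 + g) (-(dd M (i + h + 2 + g) : ℂ)) *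
        U.K (i + h + 2 + g + 1) ((dd M (i + h + 2 + g + 1) : ℂ))) * U.Faux i h = _ :=
      ((K_Faux_out U (i + h + 2 + g) (-(dd M (i + h + 2 + g) : ℂ)) (by omega)
          (by omega : i + h + 2 + g ≠ i + 1 + h)).mul_left
        (K_Faux_out U (i + h + 2 + g + 1) ((dd M (i + h + 2 + g + 1) : ℂ)) (by omega)
          (by omega))).eq
    have base : ∀ a b : ℕ, ∀ α β : ℂ, Commute (U.K a α) (U.K b β) := fun a b α β =>
      U.K_comm a b α β
    have hlamkp : (U.K (i + 1 + h) ((dd M (i + 1 + h) : ℂ)) *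
          U.K (i + h + 2 + g) (-(dd M (i + h + 2 + g) : ℂ))) *
        (U.K (i + h + 2 + g) (dd M (i + h + 2 + g) : ℂ) *
          U.K (i + h + 2 + g + 1) (-(dd M (i + h + 2 + g + 1) : ℂ))) = _ :=
      (((base _ _ _ _).mul_right (base _ _ _ _)).mul_left
        ((base _ _ _ _).mul_right (base _ _ _ _))).eq
    have hlamkm : (U.K (i + 1 + h) ((dd M (i + 1 + h) : ℂ)) *
          U.K (i + h + 2 + g) (-(dd M (i + h + 2 + g) : ℂ))) *
        (U.K (i + h + 2 + g) (-(dd M (i + h + 2 + g) : ℂ)) *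
          U.K (i + h + 2 + g + 1) ((dd M (i + h + 2 + g + 1) : ℂ))) = _ :=
      (((base _ _ _ _).mul_right (base _ _ _ _)).mul_left
        ((base _ _ _ _).mul_right (base _ _ _ _))).eq
    -- final K collapse
    have hfin : U.Faux i h * ((U.K (i + h + 2 + g) (dd M (i + h + 2 + g) : ℂ) *
          U.K (i + h + 2 + g + 1) (-(dd M (i + h + 2 + g + 1) : ℂ))) *
        (U.K (i + 1 + h) (dd M (i + 1 + h) : ℂ) *
          U.K (i + h + 2 + g) (-(dd M (i + h + 2 + g) : ℂ)))) =
        U.Faux i h * (U.K (i + 1 + h) (dd M (i + 1 + h) : ℂ) *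
          U.K (i + h + 2 + g + 1) (-(dd M (i + h + 2 + g + 1) : ℂ))) := by
      rw [K_collapse2 U (i + 1 + h) (i + h + 2 + g + 1) (i + h + 2 + g)
        (dd M (i + 1 + h) : ℂ) (-(dd M (i + h + 2 + g + 1) : ℂ))
        (dd M (i + h + 2 + g) : ℂ) (-(dd M (i + h + 2 + g) : ℂ)) (by ring)]
    -- now assemble the goal
    rw [show h + 1 + (g + 1) = h + 1 + g + 1 by omega]
    simp only [UqGL.Eaux, UqGL.Faux]
    rw [show i + 1 + (h + 1 + g) = i + h + 2 + g by omega,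
      show i + 1 + h + 1 + g = i + h + 2 + g by omega,
      show i + h + 2 + (g + 1) = i + h + 2 + g + 1 by omega,
      neg_one_pow_split (par M (i + 1 + h)) (par M (i + h + 2 + g))
        (par M (i + h + 2 + g + 1)),
      Complex.exp_neg, ← hfin]
    exact abs_step2 _ _ _ _ _ _ _ _ _ _ _ hq0 hqq hXY heY hXf hef hkpY hkmY hkpX hkmX
      hlame hlamf hZe hZf hkpZ hkmZ hlamkp hlamkm

end Helpers

/-- Proposition 4.10, branch `C_III`: for `i < m < j`,
`E_{ij} F_{mj} - (-1)^{[m]+[j]} F_{mj} E_{ij} = q^{-d_mK_m + d_jK_j} E_{im}` and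
`E_{mj} F_{ij} - (-1)^{[m]+[j]} F_{ij} E_{mj} = F_{im} q^{d_mK_m - d_jK_j}`. -/
theorem stmt14 (M N : ℕ) (hM : 1 ≤ M) (hN : 1 ≤ N) (hMN : M ≠ N)
    {A : Type*} [Ring A] [Algebra ℂ A] (U : UqGL M N A)
    (i m j : ℕ) (hi : 1 ≤ i) (him : i < m) (hmj : m < j) (hj : j ≤ M + N) :
    U.Ec i j * U.Fc m j - ((-1 : ℂ) ^ (par M m + par M j)) • (U.Fc m j * U.Ec i j) =
      U.K m (-(dd M m : ℂ)) * U.K j (dd M j : ℂ) * U.Ec i m ∧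
    U.Ec m j * U.Fc i j - ((-1 : ℂ) ^ (par M m + par M j)) • (U.Fc i j * U.Ec m j) =
      U.Fc i m * (U.K m (dd M m : ℂ) * U.K j (-(dd M j : ℂ))) := by
  constructor
  · have H := master1 U (j - m - 1) i (m - i - 1) hi (by omega)
    rw [show i + 1 + (m - i - 1) = m by omega,
      show i + (m - i - 1) + 2 + (j - m - 1) = j by omega] at H
    have e1 : U.Ec i j = U.Eaux i (m - i - 1 + 1 + (j - m - 1)) := by
      unfold UqGL.Ec; congr 1; omega
    have e2 : U.Fc m j = U.Faux m (j - m - 1) := rfl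
    have e3 : U.Ec i m = U.Eaux i (m - i - 1) := rfl
    rw [e1, e2, e3]
    exact H
  · have H := master2 U (j - m - 1) i (m - i - 1) hi (by omega)
    rw [show i + 1 + (m - i - 1) = m by omega,
      show i + (m - i - 1) + 2 + (j - m - 1) = j by omega] at H
    have e4 : U.Ec m j = U.Eaux m (j - m - 1) := rfl
    have e5 : U.Fc i j = U.Faux i (m - i - 1 + 1 + (j - m - 1)) := by
      unfold UqGL.Fc; congr 1; omega
    have e6 : U.Fc i m = U.Faux i (m - i - 1) := rfl
    rw [e4, e5, e6]
    exact H
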